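/- For every positive integer r, the circular ladder graph CL_{2r+1} (the Cartesian product of the cycle C_{2r+1} with K_2) does not admit a q-coloured MINI-orientation for any positive integer q. -/

import Mathlib

open SimpleGraph

/-- `A` is an orientation of the simple graph `G`. -/
def IsOrientation {V : Type*} (G : SimpleGraph V) (A : V → V → Prop) : Prop :=
  (∀ u v, G.Adj u v ↔ (A u v ∨ A v u)) ∧ ∀ u v, A u v → ¬ A v u

/-- `f` is a proper colouring of `G`. -/
def IsProperColoring {V α : Type*} (G : SimpleGraph V) (f : V → α) : Prop :=
  ∀ ⦃u v⦄, G.Adj u v → f u ≠ f v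

/-- `(A, f)` is a coloured MINI-orientation of `G`: a coloured in-orientation in which,
additionally, all in-neighbours of each vertex get the same colour. -/
def IsColoredMINIOrientation {V α : Type*} (G : SimpleGraph V) (A : V → V → Prop)
    (f : V → α) : Prop :=
  IsOrientation G A ∧ IsProperColoring G f ∧
    (∀ v w x, A w v → A v x → f w ≠ f x) ∧
    (∀ v x₁ x₂, A v x₁ → A v x₂ → x₁ ≠ x₂ → f x₁ ≠ f x₂) ∧
    (∀ v w₁ w₂, A w₁ v → A w₂ v → f w₁ = f w₂)

/-- The circular ladder graph `CL_t = C_t □ K_2`. -/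
def CircularLadder (t : ℕ) : SimpleGraph (Fin t × Fin 2) :=
  (SimpleGraph.cycleGraph t).boxProd (completeGraph (Fin 2))

theorem stmt19 (r : ℕ) (hr : 1 ≤ r) (q : ℕ) (hq : 0 < q) :
    ¬ ∃ (A : Fin (2 * r + 1) × Fin 2 → Fin (2 * r + 1) × Fin 2 → Prop)
        (f : Fin (2 * r + 1) × Fin 2 → Fin q),
      IsColoredMINIOrientation (CircularLadder (2 * r + 1)) A f := by
  classical
  rintro ⟨A, f, ⟨⟨htot, hasym⟩, hprop, h3, h4, h5⟩⟩
  -- basic facts about `Fin (2*r+1)`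
  have hone : (1 : Fin (2 * r + 1)).val = 1 := by
    rw [Fin.val_one']; exact Nat.mod_eq_of_lt (by omega)
  have hne1 : ∀ i : Fin (2 * r + 1), i ≠ i + 1 := by
    intro i h
    have h0 : (0 : Fin (2 * r + 1)) = 1 := by
      simpa using congrArg (fun x => x - i) h
    have h1 : (0 : Fin (2 * r + 1)).val = (1 : Fin (2 * r + 1)).val := congrArg Fin.val h0
    simp [hone] at h1
    omega
  -- rung edges
  have hrung : ∀ (i : Fin (2 * r + 1)) (a b : Fin 2), a ≠ b →
      (CircularLadder (2 * r + 1)).Adj (i, a) (i, b) := by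
    intro i a b hab
    exact SimpleGraph.boxProd_adj.mpr (Or.inr ⟨hab, rfl⟩)
  -- cycle edges
  have hcyc : ∀ (i : Fin (2 * r + 1)) (a : Fin 2),
      (CircularLadder (2 * r + 1)).Adj (i, a) (i + 1, a) := by
    intro i a
    refine SimpleGraph.boxProd_adj.mpr (Or.inl ⟨?_, rfl⟩)
    rw [SimpleGraph.cycleGraph_adj']
    right
    simpa using hone
  -- key lemma: consecutive rungs cannot be oriented the same way
  have K : ∀ (i : Fin (2 * r + 1)) (a b : Fin 2), a ≠ b →
      A (i, a) (i, b) → A (i + 1, a) (i + 1, b) → False := by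
    intro i a b hab hA1 hA2
    rcases (htot (i, b) (i + 1, b)).mp (hcyc i b) with hE | hE
    · -- (i,b) → (i+1,b); in-neighbours of (i+1,b) are (i+1,a) and (i,b)
      have hcol : f (i + 1, a) = f (i, b) := h5 (i + 1, b) (i + 1, a) (i, b) hA2 hE
      rcases (htot (i, a) (i + 1, a)).mp (hcyc i a) with hE' | hE'
      · exact h4 (i, a) (i, b) (i + 1, a) hA1 hE'
          (fun h => hne1 i (congrArg Prod.fst h)) hcol.symm
      · exact h3 (i, a) (i + 1, a) (i, b) hE' hA1 hcol
    · -- (i+1,b) → (i,b); in-neighbours of (i,b) are (i,a) and (i+1,b)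
      have hcol : f (i, a) = f (i + 1, b) := h5 (i, b) (i, a) (i + 1, b) hA1 hE
      rcases (htot (i, a) (i + 1, a)).mp (hcyc i a) with hE' | hE'
      · exact h3 (i + 1, a) (i, a) (i + 1, b) hE' hA2 hcol
      · exact h4 (i + 1, a) (i + 1, b) (i, a) hA2 hE'
          (fun h => hne1 i (congrArg Prod.fst h).symm) hcol.symm
  -- rung orientations alternate
  have step : ∀ i : Fin (2 * r + 1), A (i + 1, 0) (i + 1, 1) ↔ ¬ A (i, 0) (i, 1) := by
    intro i
    constructor
    · intro h2 h1; exact K i 0 1 (by decide) h1 h2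
    · intro hnot
      have hup : A (i, 1) (i, 0) := by
        rcases (htot (i, 0) (i, 1)).mp (hrung i 0 1 (by decide)) with h | h
        · exact absurd h hnot
        · exact h
      rcases (htot (i + 1, 0) (i + 1, 1)).mp (hrung (i + 1) 0 1 (by decide)) with h | h
      · exact h
      · exact absurd h (fun h' => K i 1 0 (by decide) hup h')
  -- induction around the cycle
  open Fin.NatCast Fin.CommRing in
  have Hn : ∀ n : ℕ, (A ((n : Fin (2 * r + 1)), 0) ((n : Fin (2 * r + 1)), 1) ↔
      (Even n ↔ A ((0 : Fin (2 * r + 1)), 0) ((0 : Fin (2 * r + 1)), 1))) := by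
    intro n
    induction n with
    | zero => simp only [Nat.cast_zero]; tauto
    | succ n ih =>
      have hc : ((n + 1 : ℕ) : Fin (2 * r + 1)) = (n : Fin (2 * r + 1)) + 1 := by
        push_cast; ring
      rw [hc, step ((n : Fin (2 * r + 1))), ih, Nat.even_add_one]
      tauto
  open Fin.NatCast Fin.CommRing in
  have hfinal := Hn (2 * r + 1)
  open Fin.NatCast Fin.CommRing in
  rw [show ((2 * r + 1 : ℕ) : Fin (2 * r + 1)) = 0 from Fin.natCast_self _] at hfinal
  have hodd : ¬ Even (2 * r + 1) := by simp [Nat.even_add_one, parity_simps]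
  tauto
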